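/- Symmetric Lovász Local Lemma over an infinite set: Let k ∈ ℕ⁺ and let B be a collection of bad k-events over a set X (each bad event B is a nonempty set of functions φ : F → k for some common finite F = dom(B) ⊆ X, with probability P[B] = |B|/k^{|F|}). If e · sup_{B ∈ B} P[B] · (sup_{B ∈ B} deg_B(B) + 1) < 1, where deg_B(B) is the number of other events whose domain intersects dom(B), then there exists a function f : X → k avoiding every bad event, i.e., no φ ∈ B ∈ B satisfies φ ⊆ f. -/

import Mathlib

set_option maxHeartbeats 1000000

open Finset
open scoped Classical

/-- A bad `k`-event over a set `X`: a nonempty set of colorings determined by a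
finite domain `dom ⊆ X` (an event is identified with the set of total colorings
`X → k` extending some bad partial coloring of its domain). -/
structure BadEvent (X : Type*) (k : ℕ) where
  dom : Finset X
  bad : Set (X → Fin k)
  nonempty : bad.Nonempty
  determined : ∀ c c' : X → Fin k, (∀ y ∈ dom, c y = c' y) → (c ∈ bad ↔ c' ∈ bad)

/-- The probability `P[B] = |B| / k^{|dom B|}` of a bad event: the proportion of
colorings of its domain that are bad. -/
noncomputable def BadEvent.prob {X : Type*} {k : ℕ} (E : BadEvent X k) : ℝ :=
  ((Finset.univ.filter fun φ : (E.dom → Fin k) =>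
      ∃ c : X → Fin k, c ∈ E.bad ∧ ∀ y : E.dom, c y = φ y).card : ℝ)
    / k ^ E.dom.card

/-- The neighborhood of `E` in an instance `ℬ`: the other events of `ℬ` whose
domain meets the domain of `E`. -/
def BadEvent.nbhd {X : Type*} {k : ℕ} (ℬ : Set (BadEvent X k)) (E : BadEvent X k) :
    Set (BadEvent X k) :=
  {E' ∈ ℬ | E' ≠ E ∧ (E'.dom ∩ E.dom).Nonempty}

namespace LLLAux

variable {X : Type*} {k : ℕ}

/-- Extend a coloring of a finite set `Y` to all of `X` (by `0` outside `Y`). -/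
noncomputable def extFun (hk : 0 < k) (Y : Finset X) (ω : Y → Fin k) : X → Fin k :=
  fun x => if h : x ∈ Y then ω ⟨x, h⟩ else ⟨0, hk⟩

/-- The event `E` as a finset of colorings of `Y`. -/
noncomputable def Ev (hk : 0 < k) (Y : Finset X) (E : BadEvent X k) :
    Finset (Y → Fin k) :=
  Finset.univ.filter fun ω => extFun hk Y ω ∈ E.bad

lemma mem_Ev {hk : 0 < k} {Y : Finset X} {E : BadEvent X k} {ω : Y → Fin k} :
    ω ∈ Ev hk Y E ↔ extFun hk Y ω ∈ E.bad := by simp [Ev]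

/-- `S` is supported on (determined by) the coordinates in `T`. -/
def Supp (Y T : Finset X) (S : Finset (Y → Fin k)) : Prop :=
  ∀ ω ω' : Y → Fin k, (∀ y : Y, (y : X) ∈ T → ω y = ω' y) → (ω ∈ S ↔ ω' ∈ S)

lemma supp_Ev (hk : 0 < k) {Y : Finset X} {E : BadEvent X k} (hsub : E.dom ⊆ Y) :
    Supp Y E.dom (Ev hk Y E) := by
  intro ω ω' hag
  simp only [mem_Ev]
  apply E.determined
  intro y hy
  have hyY : y ∈ Y := hsub hy
  simp only [extFun, dif_pos hyY]
  exact hag ⟨y, hyY⟩ hy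

/-- The set of colorings avoiding all events in `S`. -/
noncomputable def Avoid (hk : 0 < k) (Y : Finset X) (S : Finset (BadEvent X k)) :
    Finset (Y → Fin k) :=
  Finset.univ.filter fun ω => ∀ A ∈ S, ω ∉ Ev hk Y A

lemma mem_Avoid {hk : 0 < k} {Y : Finset X} {S : Finset (BadEvent X k)} {ω : Y → Fin k} :
    ω ∈ Avoid hk Y S ↔ ∀ A ∈ S, ω ∉ Ev hk Y A := by simp [Avoid]

lemma Avoid_anti {hk : 0 < k} {Y : Finset X} {S S' : Finset (BadEvent X k)} (h : S ⊆ S') :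
    Avoid hk Y S' ⊆ Avoid hk Y S := fun ω hω =>
  mem_Avoid.2 fun A hA => mem_Avoid.1 hω A (h hA)

lemma supp_Avoid (hk : 0 < k) {Y T : Finset X} {S : Finset (BadEvent X k)}
    (h : ∀ A ∈ S, A.dom ⊆ Y ∧ A.dom ⊆ T) : Supp Y T (Avoid hk Y S) := by
  intro ω ω' hag
  have key : ∀ A ∈ S, (ω ∈ Ev hk Y A ↔ ω' ∈ Ev hk Y A) := fun A hA =>
    supp_Ev hk (h A hA).1 ω ω' (fun y hy => hag y ((h A hA).2 hy))
  simp only [mem_Avoid]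
  exact ⟨fun H A hA h' => H A hA ((key A hA).2 h'),
         fun H A hA h' => H A hA ((key A hA).1 h')⟩

/-- Independence of events with disjoint supports, in counting form. -/
lemma indep_card {Y : Finset X} (T₁ T₂ : Finset X) (hdisj : ∀ z ∈ T₁, z ∉ T₂)
    (S₁ S₂ : Finset (Y → Fin k)) (h₁ : Supp Y T₁ S₁) (h₂ : Supp Y T₂ S₂) :
    (S₁ ∩ S₂).card * (Finset.univ : Finset (Y → Fin k)).card = S₁.card * S₂.card := by
  classical
  have key : ((S₁ ∩ S₂) ×ˢ (Finset.univ : Finset (Y → Fin k))).card = (S₁ ×ˢ S₂).card := by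
    apply Finset.card_nbij'
      (fun q : (Y → Fin k) × (Y → Fin k) =>
        ((fun y : Y => if (y : X) ∈ T₁ then q.1 y else q.2 y),
         (fun y : Y => if (y : X) ∈ T₁ then q.2 y else q.1 y)))
      (fun q : (Y → Fin k) × (Y → Fin k) =>
        ((fun y : Y => if (y : X) ∈ T₁ then q.1 y else q.2 y),
         (fun y : Y => if (y : X) ∈ T₁ then q.2 y else q.1 y)))
    · rintro ⟨ω, τ⟩ hq
      rw [Finset.mem_coe, Finset.mem_product] at hq ⊢
      obtain ⟨hω, -⟩ := hq
      rw [Finset.mem_inter] at hω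
      constructor
      · exact (h₁ _ ω (fun y hy => by simp [hy])).2 hω.1
      · refine (h₂ _ ω (fun y hy => ?_)).2 hω.2
        have : (y : X) ∉ T₁ := fun h => hdisj _ h hy
        simp [this]
    · rintro ⟨α, β⟩ hq
      rw [Finset.mem_coe, Finset.mem_product] at hq ⊢
      obtain ⟨hα, hβ⟩ := hq
      refine ⟨Finset.mem_inter.2 ⟨?_, ?_⟩, Finset.mem_univ _⟩
      · exact (h₁ _ α (fun y hy => by simp [hy])).2 hα
      · refine (h₂ _ β (fun y hy => ?_)).2 hβ
        have : (y : X) ∉ T₁ := fun h => hdisj _ h hy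
        simp [this]
    · rintro ⟨ω, τ⟩ hq
      refine Prod.ext (funext fun y => ?_) (funext fun y => ?_) <;>
        by_cases h : (y : X) ∈ T₁ <;> simp [h]
    · rintro ⟨α, β⟩ hq
      refine Prod.ext (funext fun y => ?_) (funext fun y => ?_) <;>
        by_cases h : (y : X) ∈ T₁ <;> simp [h]
  rwa [Finset.card_product, Finset.card_product] at key

lemma card_univ_pi (Y : Finset X) :
    (Finset.univ : Finset (Y → Fin k)).card = k ^ Y.card := by
  rw [Finset.card_univ, Fintype.card_fun, Fintype.card_fin, Fintype.card_coe]

lemma fiber_congr {Y D : Finset X} (hsub : D ⊆ Y) (φ ψ : D → Fin k) :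
    (Finset.univ.filter fun ω : Y → Fin k => ∀ y : D, ω ⟨y.1, hsub y.2⟩ = φ y).card
      = (Finset.univ.filter fun ω : Y → Fin k => ∀ y : D, ω ⟨y.1, hsub y.2⟩ = ψ y).card := by
  apply Finset.card_nbij'
    (fun ω : Y → Fin k => fun y : Y => if h : (y : X) ∈ D then ψ ⟨y.1, h⟩ else ω y)
    (fun ω : Y → Fin k => fun y : Y => if h : (y : X) ∈ D then φ ⟨y.1, h⟩ else ω y)
  · intro ω hω
    simp only [Finset.mem_coe, Finset.mem_filter, Finset.mem_univ, true_and] at hω ⊢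
    intro y
    rw [dif_pos y.2]
  · intro ω hω
    simp only [Finset.mem_coe, Finset.mem_filter, Finset.mem_univ, true_and] at hω ⊢
    intro y
    rw [dif_pos y.2]
  · intro ω hω
    simp only [Finset.mem_coe, Finset.mem_filter, Finset.mem_univ, true_and] at hω
    funext y
    by_cases h : (y : X) ∈ D
    · simp only [dif_pos h]
      have := hω ⟨y.1, h⟩
      rw [show (⟨(y : X), hsub h⟩ : {x // x ∈ Y}) = y from Subtype.ext rfl] at this
      exact this.symm
    · simp only [dif_neg h]
  · intro ω hω
    simp only [Finset.mem_coe, Finset.mem_filter, Finset.mem_univ, true_and] at hω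
    funext y
    by_cases h : (y : X) ∈ D
    · simp only [dif_pos h]
      have := hω ⟨y.1, h⟩
      rw [show (⟨(y : X), hsub h⟩ : {x // x ∈ Y}) = y from Subtype.ext rfl] at this
      exact this.symm
    · simp only [dif_neg h]

lemma card_fiber {Y D : Finset X} (hsub : D ⊆ Y) (φ : D → Fin k) :
    (Finset.univ.filter fun ω : Y → Fin k => ∀ y : D, ω ⟨y.1, hsub y.2⟩ = φ y).card
      * k ^ D.card = k ^ Y.card := by
  classical
  have H := Finset.card_eq_sum_card_fiberwise
    (f := fun ω : Y → Fin k => (fun y : D => ω ⟨y.1, hsub y.2⟩))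
    (s := Finset.univ) (t := Finset.univ) (fun _ _ => Finset.mem_univ _)
  have hfib : ∀ ψ : D → Fin k,
      (Finset.univ.filter fun ω : Y → Fin k =>
        (fun y : D => ω ⟨y.1, hsub y.2⟩) = ψ)
      = (Finset.univ.filter fun ω : Y → Fin k => ∀ y : D, ω ⟨y.1, hsub y.2⟩ = ψ y) := by
    intro ψ; apply Finset.filter_congr; intro ω _; simp [funext_iff]
  rw [card_univ_pi] at H
  calc (Finset.univ.filter fun ω : Y → Fin k =>
          ∀ y : D, ω ⟨y.1, hsub y.2⟩ = φ y).card * k ^ D.card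
      = ∑ _ψ : D → Fin k, (Finset.univ.filter fun ω : Y → Fin k =>
          ∀ y : D, ω ⟨y.1, hsub y.2⟩ = φ y).card := by
        rw [Finset.sum_const, Finset.card_univ, Fintype.card_fun, Fintype.card_fin,
          Fintype.card_coe, smul_eq_mul, mul_comm]
    _ = ∑ ψ : D → Fin k, (Finset.univ.filter fun ω : Y → Fin k =>
          ∀ y : D, ω ⟨y.1, hsub y.2⟩ = ψ y).card := by
        apply Finset.sum_congr rfl; intro ψ _; exact fiber_congr hsub φ ψ
    _ = k ^ Y.card := by
        rw [H]; apply Finset.sum_congr rfl; intro ψ _; rw [hfib ψ]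

lemma card_Ev (hk : 0 < k) {Y : Finset X} {B : BadEvent X k} (hsub : B.dom ⊆ Y) :
    (Ev hk Y B).card * k ^ B.dom.card
      = (Finset.univ.filter fun φ : (B.dom → Fin k) =>
          ∃ c : X → Fin k, c ∈ B.bad ∧ ∀ y : B.dom, c y = φ y).card * k ^ Y.card := by
  classical
  set BadP := Finset.univ.filter fun φ : (B.dom → Fin k) =>
      ∃ c : X → Fin k, c ∈ B.bad ∧ ∀ y : B.dom, c y = φ y with hBadP
  have hmap : ∀ ω ∈ Ev hk Y B, (fun y : B.dom => ω ⟨y.1, hsub y.2⟩) ∈ BadP := by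
    intro ω hω
    simp only [hBadP, Finset.mem_filter, Finset.mem_univ, true_and]
    refine ⟨extFun hk Y ω, mem_Ev.1 hω, fun y => ?_⟩
    show (if h : (y : X) ∈ Y then ω ⟨y, h⟩ else _) = _
    rw [dif_pos (hsub y.2)]
  have H := Finset.card_eq_sum_card_fiberwise hmap
  have hfib : ∀ φ ∈ BadP,
      ((Ev hk Y B).filter fun ω => (fun y : B.dom => ω ⟨y.1, hsub y.2⟩) = φ)
      = (Finset.univ.filter fun ω : Y → Fin k => ∀ y : B.dom, ω ⟨y.1, hsub y.2⟩ = φ y) := by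
    intro φ hφ
    ext ω
    simp only [Finset.mem_filter, Finset.mem_univ, true_and, mem_Ev, funext_iff]
    constructor
    · rintro ⟨-, h⟩; exact h
    · intro h
      obtain ⟨c, hc, hcφ⟩ := (Finset.mem_filter.1 hφ).2
      refine ⟨(B.determined c _ ?_).1 hc, h⟩
      intro z hz
      have h1 : c z = φ ⟨z, hz⟩ := hcφ ⟨z, hz⟩
      rw [h1, ← h ⟨z, hz⟩]
      show _ = (if h' : z ∈ Y then ω ⟨z, h'⟩ else _)
      rw [dif_pos (hsub hz)]
  calc (Ev hk Y B).card * k ^ B.dom.card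
      = (∑ φ ∈ BadP, ((Ev hk Y B).filter fun ω =>
          (fun y : B.dom => ω ⟨y.1, hsub y.2⟩) = φ).card) * k ^ B.dom.card := by rw [← H]
    _ = ∑ φ ∈ BadP, ((Ev hk Y B).filter fun ω =>
          (fun y : B.dom => ω ⟨y.1, hsub y.2⟩) = φ).card * k ^ B.dom.card := by
        rw [Finset.sum_mul]
    _ = ∑ _φ ∈ BadP, k ^ Y.card := by
        apply Finset.sum_congr rfl; intro φ hφ; rw [hfib φ hφ, card_fiber hsub φ]
    _ = BadP.card * k ^ Y.card := by rw [Finset.sum_const, smul_eq_mul]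

/-- The uniform probability of a set of colorings of `Y`. -/
noncomputable def Pr (Y : Finset X) (S : Finset (Y → Fin k)) : ℝ :=
  (S.card : ℝ) / (k : ℝ) ^ Y.card

lemma Pr_nonneg {Y : Finset X} (S : Finset (Y → Fin k)) : 0 ≤ Pr Y S :=
  div_nonneg (Nat.cast_nonneg _) (by positivity)

lemma Pr_mono (hk : 0 < k) {Y : Finset X} {S S' : Finset (Y → Fin k)} (h : S ⊆ S') :
    Pr Y S ≤ Pr Y S' := by
  have hpos : (0:ℝ) < (k : ℝ) ^ Y.card := by
    have h0 : (0:ℝ) < (k : ℝ) := by exact_mod_cast hk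
    positivity
  have hc : (S.card : ℝ) ≤ S'.card := by exact_mod_cast Finset.card_le_card h
  exact (div_le_div_iff_of_pos_right hpos).2 hc

lemma Pr_univ (hk : 0 < k) (Y : Finset X) :
    Pr Y (Finset.univ : Finset (Y → Fin k)) = 1 := by
  have hkk : ((k : ℝ) ^ Y.card) ≠ 0 := by positivity
  rw [Pr, card_univ_pi]
  push_cast
  exact div_self hkk

lemma Pr_Ev_eq_prob (hk : 0 < k) {Y : Finset X} {B : BadEvent X k} (hsub : B.dom ⊆ Y) :
    Pr Y (Ev hk Y B) = B.prob := by
  have h := card_Ev hk hsub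
  have h' : ((Ev hk Y B).card : ℝ) * (k : ℝ) ^ B.dom.card
      = ((Finset.univ.filter fun φ : (B.dom → Fin k) =>
          ∃ c : X → Fin k, c ∈ B.bad ∧ ∀ y : B.dom, c y = φ y).card : ℝ) * (k : ℝ) ^ Y.card := by
    exact_mod_cast congrArg (Nat.cast : ℕ → ℝ) h
  have h1 : ((k : ℝ) ^ Y.card) ≠ 0 := by positivity
  have h2 : ((k : ℝ) ^ B.dom.card) ≠ 0 := by positivity
  rw [Pr, BadEvent.prob]
  rw [div_eq_div_iff h1 (by positivity)]
  push_cast at h' ⊢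
  linarith [h']

lemma Pr_indep (hk : 0 < k) {Y : Finset X} (T₁ T₂ : Finset X) (hdisj : ∀ z ∈ T₁, z ∉ T₂)
    (S₁ S₂ : Finset (Y → Fin k)) (h₁ : Supp Y T₁ S₁) (h₂ : Supp Y T₂ S₂) :
    Pr Y (S₁ ∩ S₂) = Pr Y S₁ * Pr Y S₂ := by
  have h := indep_card T₁ T₂ hdisj S₁ S₂ h₁ h₂
  rw [card_univ_pi] at h
  have h' : ((S₁ ∩ S₂).card : ℝ) * (k : ℝ) ^ Y.card = (S₁.card : ℝ) * S₂.card := by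
    exact_mod_cast congrArg (Nat.cast : ℕ → ℝ) h
  have h1 : ((k : ℝ) ^ Y.card) ≠ 0 := by positivity
  have h2 : ((k : ℝ) ^ Y.card * (k : ℝ) ^ Y.card) ≠ 0 := mul_ne_zero h1 h1
  rw [Pr, Pr, Pr, div_mul_div_comm, div_eq_div_iff h1 h2]
  rw [← mul_assoc, h']

lemma Pr_insert (hk : 0 < k) (Y : Finset X) (A : BadEvent X k) (T : Finset (BadEvent X k)) :
    Pr Y (Avoid hk Y (insert A T)) + Pr Y (Ev hk Y A ∩ Avoid hk Y T) = Pr Y (Avoid hk Y T) := by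
  classical
  have h1 : Avoid hk Y (insert A T) = (Avoid hk Y T).filter (fun ω => ¬ ω ∈ Ev hk Y A) := by
    ext ω
    simp only [mem_Avoid, Finset.mem_filter, mem_Avoid, Finset.forall_mem_insert]
    tauto
  have h2 : Ev hk Y A ∩ Avoid hk Y T = (Avoid hk Y T).filter (fun ω => ω ∈ Ev hk Y A) := by
    ext ω
    simp only [Finset.mem_inter, Finset.mem_filter]
    tauto
  have h3 := Finset.card_filter_add_card_filter_not
    (s := Avoid hk Y T) (p := fun ω => ω ∈ Ev hk Y A)
  rw [h1, h2, Pr, Pr, Pr, ← add_div]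
  congr 1
  exact_mod_cast (by omega : ((Avoid hk Y T).filter (fun ω => ¬ ω ∈ Ev hk Y A)).card
    + ((Avoid hk Y T).filter (fun ω => ω ∈ Ev hk Y A)).card = (Avoid hk Y T).card)

lemma LLL_main (hk : 0 < k) (ℬ : Set (BadEvent X k))
    (𝒜 : Finset (BadEvent X k)) (h𝒜 : ↑𝒜 ⊆ ℬ)
    (Y : Finset X) (hY : ∀ B ∈ 𝒜, B.dom ⊆ Y)
    (x : ℝ) (hx0 : 0 < x) (hx1 : x < 1) (D : ℕ)
    (hdeg : ∀ B ∈ 𝒜, ∀ S₁ : Finset (BadEvent X k),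
      ↑S₁ ⊆ BadEvent.nbhd ℬ B → S₁.card ≤ D)
    (hpx : ∀ B ∈ 𝒜, B.prob ≤ x * (1 - x) ^ D) :
    ∀ S : Finset (BadEvent X k), S ⊆ 𝒜 →
      0 < Pr Y (Avoid hk Y S) ∧
      ∀ B ∈ 𝒜, B ∉ S →
        Pr Y (Ev hk Y B ∩ Avoid hk Y S) ≤ x * Pr Y (Avoid hk Y S) := by
  intro S
  induction S using Finset.strongInductionOn with
  | _ S ih =>
  intro hS𝒜
  have h1x : (0:ℝ) ≤ 1 - x := by linarith
  constructor
  · -- positivity of Pr (Avoid S)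
    rcases S.eq_empty_or_nonempty with rfl | ⟨A, hA⟩
    · have : Avoid hk Y (∅ : Finset (BadEvent X k)) = Finset.univ := by
        simp [Avoid]
      rw [this, Pr_univ hk]
      norm_num
    · obtain ⟨hpos, hcond⟩ := ih (S.erase A) (Finset.erase_ssubset hA)
        ((Finset.erase_subset _ _).trans hS𝒜)
      have hA𝒜 : A ∈ 𝒜 := hS𝒜 hA
      have hAS' : A ∉ S.erase A := Finset.notMem_erase _ _
      have h2 := hcond A hA𝒜 hAS'
      have h3 := Pr_insert hk Y A (S.erase A)
      rw [Finset.insert_erase hA] at h3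
      nlinarith [hpos, h2, h3]
  · -- the conditional bound
    intro B hB𝒜 hBS
    set S₁ := S.filter (fun A => A ∈ BadEvent.nbhd ℬ B) with hS₁def
    set S₂ := S.filter (fun A => A ∉ BadEvent.nbhd ℬ B) with hS₂def
    have hS₂dom : ∀ A ∈ S₂, A.dom ⊆ Y ∧ A.dom ⊆ Y \ B.dom := by
      intro A hA
      obtain ⟨hAS, hAn⟩ := Finset.mem_filter.1 hA
      have hAY := hY A (hS𝒜 hAS)
      refine ⟨hAY, fun z hz => Finset.mem_sdiff.2 ⟨hAY hz, fun hzB => ?_⟩⟩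
      exact hAn ⟨h𝒜 (hS𝒜 hAS), fun hEq => hBS (hEq ▸ hAS),
        ⟨z, Finset.mem_inter.2 ⟨hz, hzB⟩⟩⟩
    have hindep : Pr Y (Ev hk Y B ∩ Avoid hk Y S₂)
        = Pr Y (Ev hk Y B) * Pr Y (Avoid hk Y S₂) := by
      apply Pr_indep hk B.dom (Y \ B.dom)
        (fun z hz h' => (Finset.mem_sdiff.1 h').2 hz)
      · exact supp_Ev hk (hY B hB𝒜)
      · exact supp_Avoid hk hS₂dom
    have peel : ∀ S' : Finset (BadEvent X k), S' ⊆ S₁ →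
        (1 - x) ^ S'.card * Pr Y (Avoid hk Y S₂) ≤ Pr Y (Avoid hk Y (S₂ ∪ S')) := by
      intro S'
      induction S' using Finset.induction_on with
      | empty => intro _; simp
      | @insert a S' ha ihS' =>
        intro hsub
        have haS₁ : a ∈ S₁ := hsub (Finset.mem_insert_self _ _)
        have hsub' : S' ⊆ S₁ := fun z hz => hsub (Finset.mem_insert_of_mem hz)
        have ih' := ihS' hsub'
        have haS : a ∈ S := (Finset.mem_filter.1 haS₁).1
        have ha𝒜 : a ∈ 𝒜 := hS𝒜 haS
        have haS₂ : a ∉ S₂ := fun h => (Finset.mem_filter.1 h).2 (Finset.mem_filter.1 haS₁).2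
        have haU : a ∉ S₂ ∪ S' := by
          simp only [Finset.mem_union]
          rintro (h | h)
          exacts [haS₂ h, ha h]
        have hUsub : S₂ ∪ S' ⊆ S :=
          Finset.union_subset (Finset.filter_subset _ _)
            (hsub'.trans (Finset.filter_subset _ _))
        have hUss : S₂ ∪ S' ⊂ S := (Finset.ssubset_iff_of_subset hUsub).2 ⟨a, haS, haU⟩
        obtain ⟨hposU, hcondU⟩ := ih (S₂ ∪ S') hUss (hUsub.trans hS𝒜)
        have hstep := hcondU a ha𝒜 haU
        have hins := Pr_insert hk Y a (S₂ ∪ S')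
        have hrw : S₂ ∪ insert a S' = insert a (S₂ ∪ S') := by
          ext z; simp only [Finset.mem_union, Finset.mem_insert]; tauto
        rw [hrw, Finset.card_insert_of_notMem ha]
        calc (1 - x) ^ (S'.card + 1) * Pr Y (Avoid hk Y S₂)
            = (1 - x) * ((1 - x) ^ S'.card * Pr Y (Avoid hk Y S₂)) := by ring
          _ ≤ (1 - x) * Pr Y (Avoid hk Y (S₂ ∪ S')) :=
              mul_le_mul_of_nonneg_left ih' h1x
          _ ≤ Pr Y (Avoid hk Y (insert a (S₂ ∪ S'))) := by nlinarith [hstep, hins, hposU]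
    have hS₁sub : ↑S₁ ⊆ BadEvent.nbhd ℬ B := by
      intro A hA
      exact (Finset.mem_filter.1 (Finset.mem_coe.1 hA)).2
    have hcard : S₁.card ≤ D := hdeg B hB𝒜 S₁ hS₁sub
    have hpeel := peel S₁ (Finset.Subset.refl _)
    have hUeq : S₂ ∪ S₁ = S := by
      rw [Finset.union_comm]
      exact Finset.filter_union_filter_not_eq _ S
    rw [hUeq] at hpeel
    have hPrEv : Pr Y (Ev hk Y B) ≤ x * (1 - x) ^ D := by
      rw [Pr_Ev_eq_prob hk (hY B hB𝒜)]
      exact hpx B hB𝒜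
    have hpow : (1 - x) ^ D ≤ (1 - x) ^ S₁.card :=
      pow_le_pow_of_le_one h1x (by linarith) hcard
    have hPrS₂ : (0:ℝ) ≤ Pr Y (Avoid hk Y S₂) := Pr_nonneg _
    calc Pr Y (Ev hk Y B ∩ Avoid hk Y S)
        ≤ Pr Y (Ev hk Y B ∩ Avoid hk Y S₂) :=
          Pr_mono hk (Finset.inter_subset_inter (Finset.Subset.refl _)
            (Avoid_anti (Finset.filter_subset _ _)))
      _ = Pr Y (Ev hk Y B) * Pr Y (Avoid hk Y S₂) := hindep
      _ ≤ (x * (1 - x) ^ D) * Pr Y (Avoid hk Y S₂) :=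
          mul_le_mul_of_nonneg_right hPrEv hPrS₂
      _ ≤ x * ((1 - x) ^ S₁.card * Pr Y (Avoid hk Y S₂)) := by
          rw [mul_assoc]
          exact mul_le_mul_of_nonneg_left (mul_le_mul_of_nonneg_right hpow hPrS₂) hx0.le
      _ ≤ x * Pr Y (Avoid hk Y S) := mul_le_mul_of_nonneg_left hpeel (le_of_lt hx0)

lemma finite_LLL (hk : 0 < k) (ℬ : Set (BadEvent X k))
    (𝒜 : Finset (BadEvent X k)) (h𝒜 : ↑𝒜 ⊆ ℬ)
    (x : ℝ) (hx0 : 0 < x) (hx1 : x < 1) (D : ℕ)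
    (hdeg : ∀ B ∈ 𝒜, ∀ S₁ : Finset (BadEvent X k),
      ↑S₁ ⊆ BadEvent.nbhd ℬ B → S₁.card ≤ D)
    (hpx : ∀ B ∈ 𝒜, B.prob ≤ x * (1 - x) ^ D) :
    ∃ f : X → Fin k, ∀ E ∈ 𝒜, f ∉ E.bad := by
  classical
  set Y := 𝒜.biUnion BadEvent.dom with hY
  have hYsub : ∀ B ∈ 𝒜, B.dom ⊆ Y := fun B hB => Finset.subset_biUnion_of_mem _ hB
  obtain ⟨hpos, -⟩ := LLL_main hk ℬ 𝒜 h𝒜 Y hYsub x hx0 hx1 D hdeg hpx 𝒜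
    (Finset.Subset.refl _)
  have hne : (Avoid hk Y 𝒜).Nonempty := by
    rw [← Finset.card_pos]
    by_contra h
    push_neg at h
    interval_cases h' : (Avoid hk Y 𝒜).card
    · rw [Pr] at hpos
      simp [h'] at hpos
  obtain ⟨ω, hω⟩ := hne
  refine ⟨extFun hk Y ω, fun E hE hbad => ?_⟩
  exact mem_Avoid.1 hω E hE (mem_Ev.2 hbad)

lemma exp_bound (D : ℕ) : Real.exp (-1) ≤ ((D : ℝ) / (D + 1)) ^ D := by
  rcases Nat.eq_zero_or_pos D with rfl | hD
  · simpa using Real.exp_le_one_iff.2 (by norm_num : (-1:ℝ) ≤ 0)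
  · have hD' : (0:ℝ) < D := by exact_mod_cast hD
    have ha : ((D:ℝ) + 1) / D ≤ Real.exp (1 / D) := by
      have h2 := Real.add_one_le_exp (1 / (D:ℝ))
      have h3 : ((D:ℝ) + 1) / D = 1 / D + 1 := by field_simp; ring
      rw [h3]; exact h2
    have hb : (((D:ℝ) + 1) / D) ^ D ≤ (Real.exp (1 / D)) ^ D :=
      pow_le_pow_left₀ (by positivity) ha D
    have hc : (Real.exp (1 / (D:ℝ))) ^ D = Real.exp 1 := by
      rw [← Real.exp_nat_mul]
      congr 1
      field_simp
    rw [Real.exp_neg]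
    have hd : (((D:ℝ) + 1) / D)⁻¹ = (D:ℝ) / (D + 1) := by rw [inv_div]
    rw [← hd, inv_pow]
    exact inv_anti₀ (by positivity) (hc ▸ hb)

lemma prob_pos (hk : 0 < k) (E : BadEvent X k) : 0 < E.prob := by
  rw [BadEvent.prob]
  apply div_pos
  · have hne : (Finset.univ.filter fun φ : (E.dom → Fin k) =>
        ∃ c : X → Fin k, c ∈ E.bad ∧ ∀ y : E.dom, c y = φ y).Nonempty := by
      obtain ⟨c, hc⟩ := E.nonempty
      exact ⟨fun y : E.dom => c y,
        Finset.mem_filter.2 ⟨Finset.mem_univ _, ⟨c, hc, fun y => rfl⟩⟩⟩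
    exact_mod_cast Finset.card_pos.2 hne
  · have h0 : (0:ℝ) < (k:ℝ) := by exact_mod_cast hk
    positivity

end LLLAux

theorem symmetric_LLL
    {X : Type*} (k : ℕ) (hk : 0 < k) (ℬ : Set (BadEvent X k)) (p d : ℝ)
    (hp : ∀ E ∈ ℬ, E.prob ≤ p)
    (hdfin : ∀ E ∈ ℬ, (BadEvent.nbhd ℬ E).Finite)
    (hd : ∀ E ∈ ℬ, ((BadEvent.nbhd ℬ E).ncard : ℝ) ≤ d)
    (hcond : Real.exp 1 * p * (d + 1) < 1) :
    ∃ f : X → Fin k, ∀ E ∈ ℬ, f ∉ E.bad := by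
  classical
  rcases Set.eq_empty_or_nonempty ℬ with rfl | ⟨E₀, hE₀⟩
  · exact ⟨fun _ => ⟨0, hk⟩, fun E hE => absurd hE (Set.notMem_empty E)⟩
  have hd0 : (0:ℝ) ≤ d := le_trans (by positivity) (hd E₀ hE₀)
  have hp0 : (0:ℝ) < p := lt_of_lt_of_le (LLLAux.prob_pos hk E₀) (hp E₀ hE₀)
  set x := Real.exp 1 * p with hxdef
  have hx0 : 0 < x := mul_pos (Real.exp_pos 1) hp0
  have hx1 : x < 1 := by nlinarith [hcond, hx0, hd0]
  set D := ⌊d⌋₊ with hDdef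
  have hDd : (D:ℝ) ≤ d := Nat.floor_le hd0
  have hxD : x * ((D:ℝ) + 1) < 1 :=
    lt_of_le_of_lt (mul_le_mul_of_nonneg_left (by linarith) hx0.le) hcond
  have hpx : ∀ B ∈ ℬ, B.prob ≤ x * (1 - x) ^ D := by
    intro B hB
    have h1 : (D:ℝ) / (D + 1) ≤ 1 - x := by
      rw [div_le_iff₀ (by positivity : (0:ℝ) < (D:ℝ) + 1)]
      nlinarith [hxD]
    have h2 : ((D:ℝ) / (D + 1)) ^ D ≤ (1 - x) ^ D :=
      pow_le_pow_left₀ (by positivity) h1 D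
    have h3 : Real.exp (-1) ≤ (1 - x) ^ D := le_trans (LLLAux.exp_bound D) h2
    have h4 : p = x * Real.exp (-1) := by
      rw [Real.exp_neg, hxdef]
      field_simp
    calc B.prob ≤ p := hp B hB
      _ = x * Real.exp (-1) := h4
      _ ≤ x * (1 - x) ^ D := mul_le_mul_of_nonneg_left h3 hx0.le
  have hdeg : ∀ B ∈ ℬ, ∀ S₁ : Finset (BadEvent X k),
      ↑S₁ ⊆ BadEvent.nbhd ℬ B → S₁.card ≤ D := by
    intro B hB S₁ hsub
    apply Nat.le_floor
    calc (S₁.card : ℝ) = ((↑S₁ : Set (BadEvent X k)).ncard : ℝ) := by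
          rw [Set.ncard_coe_finset]
      _ ≤ ((BadEvent.nbhd ℬ B).ncard : ℝ) := by
          exact_mod_cast Set.ncard_le_ncard hsub (hdfin B hB)
      _ ≤ d := hd B hB
  by_contra hcon
  push_neg at hcon
  have hopen : ∀ E : BadEvent X k, IsOpen E.bad := by
    intro E
    rw [isOpen_iff_mem_nhds]
    intro f hf
    have hcyl : {g : X → Fin k | ∀ y ∈ E.dom, g y = f y} ∈ nhds f := by
      have heq : {g : X → Fin k | ∀ y ∈ E.dom, g y = f y}
          = ⋂ y ∈ (E.dom : Set X), (fun g : X → Fin k => g y) ⁻¹' {f y} := by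
        ext g; simp
      rw [heq]
      refine (Filter.biInter_mem E.dom.finite_toSet).2 (fun y _ => ?_)
      exact IsOpen.mem_nhds
        ((continuous_apply y).isOpen_preimage _ (isOpen_discrete _)) rfl
    exact Filter.mem_of_superset hcyl
      (fun g hg => (E.determined f g (fun y hy => (hg y hy).symm)).1 hf)
  have hce := (isCompact_univ (X := X → Fin k)).elim_finite_subfamily_closed
    (fun E : ℬ => {f : X → Fin k | f ∉ E.1.bad})
    (fun E => isClosed_compl_iff.2 (hopen E.1))
    (by
      ext f
      simp only [Set.mem_inter_iff, Set.mem_iInter, Set.mem_univ, true_and,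
        Set.mem_setOf_eq, Set.mem_empty_iff_false, iff_false, not_forall, not_not]
      obtain ⟨E, hE, hfE⟩ := hcon f
      exact ⟨⟨E, hE⟩, hfE⟩)
  obtain ⟨t, ht⟩ := hce
  have him : ∀ B ∈ t.image (Subtype.val : ℬ → BadEvent X k), B ∈ ℬ := by
    intro B hB
    obtain ⟨⟨B', hB'⟩, -, rfl⟩ := Finset.mem_image.1 hB
    exact hB'
  obtain ⟨f, hf⟩ := LLLAux.finite_LLL hk ℬ (t.image Subtype.val)
    (fun B hB => him B (Finset.mem_coe.1 hB)) x hx0 hx1 D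
    (fun B hB => hdeg B (him B hB)) (fun B hB => hpx B (him B hB))
  have hmem : f ∈ (Set.univ : Set (X → Fin k)) ∩
      ⋂ E ∈ t, {f : X → Fin k | f ∉ (E : ℬ).1.bad} := by
    refine ⟨trivial, Set.mem_iInter₂.2 (fun E hE => ?_)⟩
    exact hf E.1 (Finset.mem_image_of_mem _ hE)
  rw [ht] at hmem
  exact hmem
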